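/- Let g(x) = 2x·log_2(2x) + (1−2x)·log_2(1−2x) − x·log_2 x − (1−x)·log_2(1−x), let c = 1/2 − √2/4, and let b = −g(c). Fix a constant ε > 0. There exist constants C_1, C_2 > 0 and N such that for all n ≥ N and all integers k with 2^{n(1−b+ε)} < k ≤ 2^{n(1−ε)}, one has C_1 · n ≤ capt_k(Q_n) ≤ C_2 · n. -/

import Mathlib

open SimpleGraph Finset

/-- One step of a player in a reflexive graph: stay put (the loop) or move along an edge. -/
def stepRel {V : Type*} (G : SimpleGraph V) (u v : V) : Prop := u = v ∨ G.Adj u v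

/-- `CatchIn G t c r`: with the cops currently at positions `c` and the robber at `r`
(cops to move next), the cops can guarantee to capture the robber within `t` further
rounds (a round consists of a cops' move followed by a robber's move; capture means
some cop occupies the robber's vertex). -/
def CatchIn {V : Type*} (G : SimpleGraph V) {k : ℕ} : ℕ → (Fin k → V) → V → Prop
  | 0, c, r => ∃ i, c i = r
  | (t + 1), c, r => (∃ i, c i = r) ∨
      ∃ c' : Fin k → V, (∀ i, stepRel G (c i) (c' i)) ∧
        ((∃ i, c' i = r) ∨ ∀ r', stepRel G r r' → CatchIn G t c' r')

/-- `k` cops have a strategy capturing the robber within `t` rounds (not counting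
round 0, in which the cops choose starting positions and then the robber, knowing
the cops' positions, chooses hers). -/
def CopsWinIn {V : Type*} (G : SimpleGraph V) (k t : ℕ) : Prop :=
  ∃ c₀ : Fin k → V, ∀ r₀ : V, CatchIn G t c₀ r₀

/-- The cop number: the least `k` such that `k` cops have a winning strategy. -/
noncomputable def copNumber {V : Type*} (G : SimpleGraph V) : ℕ :=
  sInf {k | ∃ t, CopsWinIn G k t}

/-- The `k`-capture time: the least `t` such that `k` cops can guarantee capture
within `t` rounds. -/
noncomputable def captTime {V : Type*} (G : SimpleGraph V) (k : ℕ) : ℕ :=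
  sInf {t | CopsWinIn G k t}

/-- The metric `k`-center radius: the least `r` such that some set of at most `k`
vertices is within distance `r` of every vertex. -/
noncomputable def radK {V : Type*} (G : SimpleGraph V) (k : ℕ) : ℕ :=
  sInf {r | ∃ S : Finset V, S.Nonempty ∧ S.card ≤ k ∧ ∀ v, ∃ s ∈ S, G.dist v s ≤ r}

/-- `H ⊆ V(G)` induces a retract of the reflexive graph `G`: there is a map
`f : V(G) → H` fixing `H` pointwise such that every edge `uv` of `G` is sent to a
single vertex or to an edge. -/
def IsRetract {V : Type*} (G : SimpleGraph V) (H : Set V) : Prop :=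
  ∃ f : V → V, (∀ v, f v ∈ H) ∧ (∀ v ∈ H, f v = v) ∧
    ∀ u v, G.Adj u v → f u = f v ∨ G.Adj (f u) (f v)

/-- The hypercube `Q n`: vertices are binary strings of length `n`, adjacent iff they
differ in exactly one coordinate (loops at every vertex are implicit). -/
def hypercube (n : ℕ) : SimpleGraph (Fin n → Bool) :=
  SimpleGraph.fromRel (fun u v => ∃ j, u j ≠ v j ∧ ∀ i, i ≠ j → u i = v i)

/-- The function `g` from the summary of hypercube results. -/
noncomputable def gfun (x : ℝ) : ℝ :=
  2 * x * Real.logb 2 (2 * x) + (1 - 2 * x) * Real.logb 2 (1 - 2 * x)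
    - x * Real.logb 2 x - (1 - x) * Real.logb 2 (1 - x)

/-- The constant `c = 1/2 - √2/4`. -/
noncomputable def cconst : ℝ := 1 / 2 - Real.sqrt 2 / 4

/-- The constant `b = -g(c)`. -/
noncomputable def bconst : ℝ := -gfun cconst


namespace CRAux

/-- one-coordinate (or zero) change gives a legal step in the hypercube -/
lemma step_of_eq_off {n : ℕ} (d : Fin n) (x y : Fin n → Bool)
    (h : ∀ m, m ≠ d → x m = y m) : stepRel (hypercube n) x y := by
  by_cases hd : x d = y d
  · left; funext m
    by_cases hm : m = d
    · subst hm; exact hd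
    · exact h m hm
  · right
    rw [hypercube, SimpleGraph.fromRel_adj]
    refine ⟨fun hxy => hd (congrFun hxy d), Or.inl ⟨d, hd, fun i hi => h i hi⟩⟩

lemma hamming_step {n : ℕ} {x y : Fin n → Bool}
    (h : stepRel (hypercube n) x y) : hammingDist x y ≤ 1 := by
  rcases h with rfl | h
  · simp
  · rw [hypercube, SimpleGraph.fromRel_adj] at h
    obtain ⟨-, h⟩ := h
    have : ∃ d : Fin n, ∀ i, i ≠ d → x i = y i := by
      rcases h with ⟨d, -, hd⟩ | ⟨d, -, hd⟩
      · exact ⟨d, hd⟩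
      · exact ⟨d, fun i hi => (hd i hi).symm⟩
    obtain ⟨d, hd⟩ := this
    calc hammingDist x y = (univ.filter fun i => x i ≠ y i).card := rfl
      _ ≤ ({d} : Finset (Fin n)).card := by
          apply Finset.card_le_card
          intro i hi
          simp only [mem_filter, mem_univ, true_and] at hi
          simp only [mem_singleton]
          by_contra hne
          exact hi (hd i hne)
      _ = 1 := rfl

/-- stationary robber far from all cops survives -/
lemma no_catch {n k : ℕ} : ∀ (t : ℕ) (c : Fin k → (Fin n → Bool)) (r : Fin n → Bool),
    (∀ i, t < hammingDist (c i) r) → ¬ CatchIn (hypercube n) t c r := by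
  intro t
  induction t with
  | zero =>
    intro c r h hc
    obtain ⟨i, hi⟩ := hc
    have := h i
    rw [hi] at this
    simp at this
  | succ t ih =>
    intro c r h hc
    rcases hc with ⟨i, hi⟩ | ⟨c', hstep, hrest⟩
    · have := h i; rw [hi] at this; simp at this
    · have hfar : ∀ i, t < hammingDist (c' i) r := by
        intro i
        have h1 := hamming_step (hstep i)
        have h2 := h i
        have h3 := hammingDist_triangle (c i) (c' i) r
        omega
      rcases hrest with ⟨i, hi⟩ | hall
      · have := hfar i; rw [hi] at this; simp at this
      · exact ih c' r hfar (hall r (Or.inl rfl))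

/-- Hamming balls are small: at most ∑_{s≤t} C(n,s) points -/
lemma ball_card_le {n : ℕ} (c : Fin n → Bool) (t : ℕ) :
    (univ.filter fun x : Fin n → Bool => hammingDist c x ≤ t).card
      ≤ ∑ s ∈ range (t + 1), n.choose s := by
  classical
  have := Finset.card_le_card_of_injOn
    (f := fun x : Fin n → Bool => univ.filter fun i => x i ≠ c i)
    (s := univ.filter fun x : Fin n → Bool => hammingDist c x ≤ t)
    (t := (range (t + 1)).biUnion fun s => Finset.univ.powersetCard s)
    ?_ ?_
  · refine le_trans this (le_trans (Finset.card_biUnion_le) ?_)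
    apply Finset.sum_le_sum
    intro s _
    rw [Finset.card_powersetCard]
    simp
  · intro x hx
    simp only [Finset.coe_filter, Set.mem_setOf_eq, Finset.mem_coe, mem_filter, mem_univ, true_and] at hx
    rw [Finset.mem_coe, Finset.mem_biUnion]
    refine ⟨(univ.filter fun i => x i ≠ c i).card, ?_, ?_⟩
    · rw [mem_range]
      have : hammingDist x c ≤ t := by rwa [hammingDist_comm]
      calc (univ.filter fun i => x i ≠ c i).card = hammingDist x c := rfl
        _ ≤ t := this
        _ < t + 1 := Nat.lt_succ_self t
    · rw [Finset.mem_powersetCard]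
      exact ⟨Finset.subset_univ _, rfl⟩
  · intro x hx y hy hxy
    funext i
    have := Finset.ext_iff.mp hxy i
    simp only [mem_filter, mem_univ, true_and] at this
    cases hxb : x i <;> cases hyb : y i <;> cases hcb : c i <;> simp_all

/-- Chernoff-style bound: (∑_{s≤t} C(n,s)) · p^t (1-p)^{n-t} ≤ 1 for 0<p≤1/2, t≤n -/
lemma sum_choose_mul_le (n t : ℕ) (p : ℝ) (hp0 : 0 < p) (hp : p ≤ 1/2) (htn : t ≤ n) :
    (∑ s ∈ range (t + 1), (n.choose s : ℝ)) * (p ^ t * (1 - p) ^ (n - t)) ≤ 1 := by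
  have hq0 : (0:ℝ) < 1 - p := by linarith
  have hpq : p ≤ 1 - p := by linarith
  have key : ∀ s ∈ range (t + 1),
      (n.choose s : ℝ) * (p ^ t * (1 - p) ^ (n - t))
        ≤ (n.choose s : ℝ) * (p ^ s * (1 - p) ^ (n - s)) := by
    intro s hs
    rw [mem_range] at hs
    have hst : s ≤ t := Nat.lt_succ_iff.mp hs
    apply mul_le_mul_of_nonneg_left _ (by positivity)
    have e1 : p ^ t = p ^ s * p ^ (t - s) := by rw [← pow_add]; congr 1; omega
    have e2 : (1-p) ^ (n - s) = (1-p) ^ (n - t) * (1-p) ^ (t - s) := by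
      rw [← pow_add]; congr 1; omega
    rw [e1, e2]
    have : p ^ (t - s) ≤ (1 - p) ^ (t - s) := pow_le_pow_left₀ hp0.le hpq _
    calc p ^ s * p ^ (t-s) * (1-p)^(n-t) ≤ p ^ s * (1-p) ^ (t-s) * (1-p)^(n-t) := by
          apply mul_le_mul_of_nonneg_right _ (by positivity)
          exact mul_le_mul_of_nonneg_left this (by positivity)
      _ = p ^ s * ((1-p)^(n-t) * (1-p)^(t-s)) := by ring
  calc (∑ s ∈ range (t + 1), (n.choose s : ℝ)) * (p ^ t * (1 - p) ^ (n - t))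
      = ∑ s ∈ range (t + 1), (n.choose s : ℝ) * (p ^ t * (1 - p) ^ (n - t)) := by
        rw [Finset.sum_mul]
    _ ≤ ∑ s ∈ range (t + 1), (n.choose s : ℝ) * (p ^ s * (1 - p) ^ (n - s)) :=
        Finset.sum_le_sum key
    _ ≤ ∑ s ∈ range (n + 1), (n.choose s : ℝ) * (p ^ s * (1 - p) ^ (n - s)) := by
        apply Finset.sum_le_sum_of_subset_of_nonneg
        · exact Finset.range_subset_range.mpr (by omega)
        · intro s _ _; positivity
    _ = (p + (1 - p)) ^ n := by
        rw [add_pow]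
        apply Finset.sum_congr rfl
        intro s _; ring
    _ = 1 := by norm_num

-- facts about δ = min (1/4) (ε²/100)
lemma delta_facts (ε : ℝ) (hε : 0 < ε) :
    ∃ δ : ℝ, δ = min (1/4 : ℝ) (ε^2/100) ∧ 0 < δ ∧ δ ≤ 1/4 ∧
      Real.log (1/δ) * δ + Real.log (1/(1-δ)) ≤ (4/15) * ε := by
  set δ : ℝ := min (1/4 : ℝ) (ε^2/100) with hδdef
  have hδ0 : 0 < δ := lt_min (by norm_num) (by positivity)
  have hδ14 : δ ≤ 1/4 := min_le_left _ _
  have hδe : δ ≤ ε^2/100 := min_le_right _ _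
  have hs0 : 0 < Real.sqrt δ := Real.sqrt_pos.mpr hδ0
  have hsq : Real.sqrt δ * Real.sqrt δ = δ := Real.mul_self_sqrt hδ0.le
  have hs14 : Real.sqrt δ ≤ 1/2 := by
    rw [show (1/2 : ℝ) = Real.sqrt (1/4) by
      rw [show (1/4 : ℝ) = (1/2)^2 by norm_num, Real.sqrt_sq (by norm_num)]]
    exact Real.sqrt_le_sqrt hδ14
  have hse : Real.sqrt δ ≤ ε / 10 := by
    rw [show ε / 10 = Real.sqrt (ε^2/100) by
      rw [show ε^2/100 = (ε/10)^2 by ring, Real.sqrt_sq (by positivity)]]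
    exact Real.sqrt_le_sqrt hδe
  refine ⟨δ, rfl, hδ0, hδ14, ?_⟩
  -- log(1/δ) ≤ 2/√δ
  have h1 : Real.log (1/δ) ≤ 2 / Real.sqrt δ := by
    have : Real.log (1 / Real.sqrt δ) ≤ 1 / Real.sqrt δ - 1 :=
      Real.log_le_sub_one_of_pos (by positivity)
    have hrw : Real.log (1/δ) = 2 * Real.log (1 / Real.sqrt δ) := by
      rw [show (1:ℝ)/δ = (1 / Real.sqrt δ)^2 by
        rw [div_pow, one_pow]; rw [sq, hsq], Real.log_pow]
      push_cast; ring
    rw [hrw]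
    have h0 : 2 / Real.sqrt δ = 2 * (1 / Real.sqrt δ) := by ring
    rw [h0]
    linarith
  -- log(1/(1-δ)) ≤ δ/(1-δ) ≤ (4/3) δ
  have hd1 : δ < 1 := by linarith
  have h2 : Real.log (1/(1-δ)) ≤ (4/3) * δ := by
    have hpos : (0:ℝ) < 1 - δ := by linarith
    have : Real.log (1 - δ) ≥ -(δ/(1-δ)) := by
      have hl : Real.log (1/(1-δ)) ≤ 1/(1-δ) - 1 := Real.log_le_sub_one_of_pos (by positivity)
      have : Real.log (1/(1-δ)) = - Real.log (1-δ) := by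
        rw [one_div, Real.log_inv]
      rw [this] at hl
      have : 1/(1-δ) - 1 = δ/(1-δ) := by field_simp; ring
      linarith [hl, this.symm.le]
    have hlog : Real.log (1/(1-δ)) = - Real.log (1-δ) := by rw [one_div, Real.log_inv]
    rw [hlog]
    have : δ/(1-δ) ≤ (4/3)*δ := by
      rw [div_le_iff₀ hpos]
      nlinarith
    linarith
  -- combine: log(1/δ)*δ ≤ 2√δ ≤ ε/5 ; (4/3)δ ≤ ε/15
  have h3 : Real.log (1/δ) * δ ≤ 2 * Real.sqrt δ := by
    calc Real.log (1/δ) * δ ≤ (2 / Real.sqrt δ) * δ := by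
          apply mul_le_mul_of_nonneg_right h1 hδ0.le
      _ = 2 * Real.sqrt δ := by
          field_simp
          nlinarith [hsq]
  have h4 : 2 * Real.sqrt δ ≤ ε/5 := by linarith
  have h5 : (4/3) * δ ≤ ε/15 := by
    have : δ ≤ (1/2) * (ε/10) := by
      calc δ = Real.sqrt δ * Real.sqrt δ := hsq.symm
        _ ≤ (1/2) * (ε/10) := mul_le_mul hs14 hse hs0.le (by norm_num)
    linarith
  linarith

/-- number of mismatches between `a` and `r` on coordinates in `[lo, hi)` -/
def mis {n : ℕ} (lo hi : ℕ) (a r : Fin n → Bool) : ℕ :=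
  (univ.filter fun m : Fin n => lo ≤ (m : ℕ) ∧ (m : ℕ) < hi ∧ a m ≠ r m).card

lemma mis_le {n : ℕ} (lo hi : ℕ) (a r : Fin n → Bool) : mis lo hi a r ≤ hi - lo := by
  classical
  have h := Finset.card_le_card_of_injOn (fun m : Fin n => (m : ℕ))
    (s := univ.filter fun m : Fin n => lo ≤ (m : ℕ) ∧ (m : ℕ) < hi ∧ a m ≠ r m)
    (t := Finset.Ico lo hi) ?_ ?_
  · simpa [mis, Nat.card_Ico] using h
  · intro m hm
    simp only [Finset.coe_filter, Set.mem_setOf_eq, Finset.mem_coe, mem_filter, mem_univ, true_and] at hm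
    rw [Finset.mem_coe, Finset.mem_Ico]
    exact ⟨hm.1, hm.2.1⟩
  · intro x _ y _ hxy
    exact Fin.ext hxy

lemma mis_zero_eq {n : ℕ} {lo hi : ℕ} {a r : Fin n → Bool} (h : mis lo hi a r = 0) :
    ∀ m : Fin n, lo ≤ (m : ℕ) → (m : ℕ) < hi → a m = r m := by
  intro m h1 h2
  rw [mis, Finset.card_eq_zero] at h
  by_contra hne
  have : m ∈ (univ.filter fun m : Fin n => lo ≤ (m : ℕ) ∧ (m : ℕ) < hi ∧ a m ≠ r m) := by
    simp [h1, h2, hne]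
  rw [h] at this
  exact absurd this (Finset.notMem_empty m)

lemma exists_mismatch {n : ℕ} {lo hi : ℕ} {a r : Fin n → Bool} (h : mis lo hi a r ≠ 0) :
    ∃ d : Fin n, lo ≤ (d : ℕ) ∧ (d : ℕ) < hi ∧ a d ≠ r d := by
  have : 0 < mis lo hi a r := Nat.pos_of_ne_zero h
  rw [mis, Finset.card_pos] at this
  obtain ⟨d, hd⟩ := this
  simp only [mem_filter, mem_univ, true_and] at hd
  exact ⟨d, hd⟩

lemma mis_update {n : ℕ} {lo hi : ℕ} {a r : Fin n → Bool} {d : Fin n}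
    (h1 : lo ≤ (d : ℕ)) (h2 : (d : ℕ) < hi) (h3 : a d ≠ r d) :
    mis lo hi (Function.update a d (r d)) r + 1 = mis lo hi a r := by
  classical
  have hset : (univ.filter fun m : Fin n =>
      lo ≤ (m : ℕ) ∧ (m : ℕ) < hi ∧ Function.update a d (r d) m ≠ r m)
      = (univ.filter fun m : Fin n => lo ≤ (m : ℕ) ∧ (m : ℕ) < hi ∧ a m ≠ r m).erase d := by
    ext m
    simp only [Finset.mem_erase, mem_filter, mem_univ, true_and]
    by_cases hm : m = d
    · subst hm
      simp [Function.update_self]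
    · simp [Function.update_of_ne hm, hm]
  rw [mis, mis, hset]
  apply Finset.card_erase_add_one
  simp only [mem_filter, mem_univ, true_and]
  exact ⟨h1, h2, h3⟩

lemma mis_update_out {n : ℕ} {lo hi : ℕ} {a r : Fin n → Bool} {d : Fin n} (v : Bool)
    (h : ¬ (lo ≤ (d : ℕ) ∧ (d : ℕ) < hi)) :
    mis lo hi (Function.update a d v) r = mis lo hi a r := by
  classical
  unfold mis
  congr 1
  ext m
  simp only [mem_filter, mem_univ, true_and]
  by_cases hm : m = d
  · subst hm
    constructor
    · rintro ⟨ha, hb, -⟩; exact absurd ⟨ha, hb⟩ h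
    · rintro ⟨ha, hb, -⟩; exact absurd ⟨ha, hb⟩ h
  · rw [Function.update_of_ne hm]

lemma mis_robber_in {n : ℕ} {lo hi : ℕ} {a r r' : Fin n → Bool} {d : Fin n}
    (h : ∀ m, m ≠ d → r' m = r m) :
    mis lo hi a r' ≤ mis lo hi a r + 1 := by
  classical
  have hsub : (univ.filter fun m : Fin n => lo ≤ (m : ℕ) ∧ (m : ℕ) < hi ∧ a m ≠ r' m)
      ⊆ insert d (univ.filter fun m : Fin n => lo ≤ (m : ℕ) ∧ (m : ℕ) < hi ∧ a m ≠ r m) := by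
    intro m hm
    simp only [mem_filter, mem_univ, true_and] at hm
    rw [Finset.mem_insert]
    by_cases hmd : m = d
    · exact Or.inl hmd
    · right
      simp only [mem_filter, mem_univ, true_and]
      exact ⟨hm.1, hm.2.1, by rw [← h m hmd]; exact hm.2.2⟩
  calc mis lo hi a r' ≤ _ := Finset.card_le_card hsub
    _ ≤ mis lo hi a r + 1 := by
        refine le_trans (Finset.card_insert_le _ _) ?_
        rfl

lemma mis_robber_out {n : ℕ} {lo hi : ℕ} {a r r' : Fin n → Bool} {d : Fin n}
    (h : ∀ m, m ≠ d → r' m = r m) (hd : ¬ (lo ≤ (d : ℕ) ∧ (d : ℕ) < hi)) :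
    mis lo hi a r' ≤ mis lo hi a r := by
  classical
  apply Finset.card_le_card
  intro m hm
  simp only [mem_filter, mem_univ, true_and] at hm ⊢
  have hmd : m ≠ d := by
    rintro rfl
    exact hd ⟨hm.1, hm.2.1⟩
  exact ⟨hm.1, hm.2.1, by rw [← h m hmd]; exact hm.2.2⟩

/-- effect of a robber step on the two mismatch counts -/
lemma mis_robber_step {n : ℕ} {a₀ a₁ r r' : Fin n → Bool}
    (h : stepRel (hypercube n) r r') :
    mis 0 (n/2) a₀ r' + mis (n/2) (2*(n/2)) a₁ r'
      ≤ mis 0 (n/2) a₀ r + mis (n/2) (2*(n/2)) a₁ r + 1 := by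
  rcases h with rfl | h
  · omega
  · rw [hypercube, SimpleGraph.fromRel_adj] at h
    have hd : ∃ d : Fin n, ∀ m, m ≠ d → r' m = r m := by
      rcases h.2 with ⟨d, -, hd⟩ | ⟨d, -, hd⟩
      · exact ⟨d, fun m hm => (hd m hm).symm⟩
      · exact ⟨d, fun m hm => hd m hm⟩
    obtain ⟨d, hd⟩ := hd
    by_cases h0 : (d : ℕ) < n/2
    · have := mis_robber_in (a := a₀) (lo := 0) (hi := n/2) hd
      have := mis_robber_out (a := a₁) (lo := n/2) (hi := 2*(n/2)) hd (by omega)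
      omega
    · by_cases h1 : (d : ℕ) < 2*(n/2)
      · have := mis_robber_out (a := a₀) (lo := 0) (hi := n/2) hd (by omega)
        have := mis_robber_in (a := a₁) (lo := n/2) (hi := 2*(n/2)) hd
        omega
      · have := mis_robber_out (a := a₀) (lo := 0) (hi := n/2) hd (by omega)
        have := mis_robber_out (a := a₁) (lo := n/2) (hi := 2*(n/2)) hd (by omega)
        omega

/-- team-0 cop position: controls coordinates `< n/2`, free pattern `u` elsewhere -/
def posF (n : ℕ) (a : Fin n → Bool) (u : Fin (n - n/2) → Bool) : Fin n → Bool :=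
  fun m => if (m : ℕ) < n/2 then a m
    else u ⟨(m : ℕ) - n/2, by have := m.isLt; omega⟩

/-- team-1 cop position: controls coordinates in `[n/2, 2*(n/2))` -/
def posT (n : ℕ) (a : Fin n → Bool) (u : Fin (n - n/2) → Bool) : Fin n → Bool :=
  fun m => if h : (m : ℕ) < n/2 then u ⟨(m : ℕ), by have := m.isLt; omega⟩
    else if (m : ℕ) < 2*(n/2) then a m
    else u ⟨(m : ℕ) - n/2, by have := m.isLt; omega⟩

def uF {n : ℕ} (r : Fin n → Bool) : Fin (n - n/2) → Bool :=
  fun i => r ⟨(i : ℕ) + n/2, by have := i.isLt; omega⟩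

def uT {n : ℕ} (r : Fin n → Bool) : Fin (n - n/2) → Bool :=
  fun i => if h : (i : ℕ) < n/2 then r ⟨(i : ℕ), by have := i.isLt; omega⟩
    else r ⟨(i : ℕ) + n/2, by have := i.isLt; omega⟩

lemma posF_eq {n : ℕ} {a r : Fin n → Bool} (h : mis 0 (n/2) a r = 0) :
    posF n a (uF r) = r := by
  funext m
  unfold posF uF
  by_cases hm : (m : ℕ) < n/2
  · rw [if_pos hm]
    exact mis_zero_eq h m (Nat.zero_le _) hm
  · rw [if_neg hm]
    congr 1
    apply Fin.ext
    simp only []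
    have := m.isLt
    omega

lemma posT_eq {n : ℕ} {a r : Fin n → Bool} (h : mis (n/2) (2*(n/2)) a r = 0) :
    posT n a (uT r) = r := by
  funext m
  unfold posT uT
  by_cases hm : (m : ℕ) < n/2
  · rw [dif_pos hm]
    rw [dif_pos (by simpa using hm)]
  · rw [dif_neg hm]
    by_cases hm2 : (m : ℕ) < 2*(n/2)
    · rw [if_pos hm2]
      exact mis_zero_eq h m (by omega) hm2
    · rw [if_neg hm2]
      have hge : ¬ ((⟨(m : ℕ) - n/2, by have := m.isLt; omega⟩ : Fin (n - n/2)) : ℕ) < n/2 := by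
        simp only []
        omega
      rw [dif_neg hge]
      congr 1
      apply Fin.ext
      simp only []
      omega

variable {n k : ℕ}

-- decode a cop index into a seed, via a fixed embedding
open Classical in
noncomputable def dec (f : (Bool × (Fin (n - n/2) → Bool)) ↪ Fin k) (i : Fin k) :
    Bool × (Fin (n - n/2) → Bool) :=
  if h : ∃ p, f p = i then h.choose else (false, fun _ => false)

lemma dec_f (f : (Bool × (Fin (n - n/2) → Bool)) ↪ Fin k)
    (p : Bool × (Fin (n - n/2) → Bool)) : dec f (f p) = p := by
  unfold dec
  rw [dif_pos ⟨p, rfl⟩]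
  exact f.injective (Exists.choose_spec (⟨p, rfl⟩ : ∃ q, f q = f p))

/-- positions of all `k` cops, given the two team anchors -/
noncomputable def copPos (f : (Bool × (Fin (n - n/2) → Bool)) ↪ Fin k)
    (a₀ a₁ : Fin n → Bool) (i : Fin k) : Fin n → Bool :=
  if (dec f i).1 = true then posT n a₁ (dec f i).2 else posF n a₀ (dec f i).2

lemma cop_cov0 (f : (Bool × (Fin (n - n/2) → Bool)) ↪ Fin k) (a₀ a₁ r : Fin n → Bool)
    (h : mis 0 (n/2) a₀ r = 0) : ∃ i, copPos f a₀ a₁ i = r := by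
  refine ⟨f (false, uF r), ?_⟩
  rw [copPos, dec_f]
  simpa using posF_eq h

lemma cop_cov1 (f : (Bool × (Fin (n - n/2) → Bool)) ↪ Fin k) (a₀ a₁ r : Fin n → Bool)
    (h : mis (n/2) (2*(n/2)) a₁ r = 0) : ∃ i, copPos f a₀ a₁ i = r := by
  refine ⟨f (true, uT r), ?_⟩
  rw [copPos, dec_f]
  simpa using posT_eq h

lemma cop_step (f : (Bool × (Fin (n - n/2) → Bool)) ↪ Fin k) (a₀ a₁ : Fin n → Bool)
    (d₀ d₁ : Fin n) (h₀ : (d₀ : ℕ) < n/2) (h₁ : n/2 ≤ (d₁ : ℕ)) (h₁' : (d₁ : ℕ) < 2*(n/2))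
    (v₀ v₁ : Bool) (i : Fin k) :
    stepRel (hypercube n) (copPos f a₀ a₁ i)
      (copPos f (Function.update a₀ d₀ v₀) (Function.update a₁ d₁ v₁) i) := by
  unfold copPos
  by_cases ht : (dec f i).1 = true
  · rw [if_pos ht, if_pos ht]
    apply step_of_eq_off d₁
    intro m hm
    unfold posT
    by_cases hc1 : (m : ℕ) < n/2
    · rw [dif_pos hc1, dif_pos hc1]
    · rw [dif_neg hc1, dif_neg hc1]
      by_cases hc2 : (m : ℕ) < 2*(n/2)
      · rw [if_pos hc2, if_pos hc2, Function.update_of_ne hm]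
      · rw [if_neg hc2, if_neg hc2]
  · rw [if_neg ht, if_neg ht]
    apply step_of_eq_off d₀
    intro m hm
    unfold posF
    by_cases hc1 : (m : ℕ) < n/2
    · rw [if_pos hc1, if_pos hc1, Function.update_of_ne hm]
    · rw [if_neg hc1, if_neg hc1]

lemma catch_main (f : (Bool × (Fin (n - n/2) → Bool)) ↪ Fin k) :
    ∀ (T : ℕ) (a₀ a₁ r : Fin n → Bool),
      mis 0 (n/2) a₀ r + mis (n/2) (2*(n/2)) a₁ r ≤ T →
      CatchIn (hypercube n) T (copPos f a₀ a₁) r := by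
  intro T
  induction T with
  | zero =>
    intro a₀ a₁ r h
    exact cop_cov0 f a₀ a₁ r (by omega)
  | succ T ih =>
    intro a₀ a₁ r h
    by_cases h0 : mis 0 (n/2) a₀ r = 0
    · exact Or.inl (cop_cov0 f a₀ a₁ r h0)
    by_cases h1 : mis (n/2) (2*(n/2)) a₁ r = 0
    · exact Or.inl (cop_cov1 f a₀ a₁ r h1)
    obtain ⟨d₀, hd₀1, hd₀2, hd₀3⟩ := exists_mismatch h0
    obtain ⟨d₁, hd₁1, hd₁2, hd₁3⟩ := exists_mismatch h1
    refine Or.inr ⟨copPos f (Function.update a₀ d₀ (r d₀)) (Function.update a₁ d₁ (r d₁)),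
      fun i => cop_step f a₀ a₁ d₀ d₁ hd₀2 hd₁1 hd₁2 _ _ i, Or.inr fun r' hr' => ?_⟩
    apply ih
    have e0 := mis_update (lo := 0) (hi := n/2) hd₀1 hd₀2 hd₀3
    have e1 := mis_update (lo := n/2) (hi := 2*(n/2)) hd₁1 hd₁2 hd₁3
    have e0' := mis_update_out (r := r) (a := a₁) (lo := n/2) (hi := 2*(n/2)) (d := d₀) (r d₀) (by omega)
    have e1' := mis_update_out (r := r) (a := a₀) (lo := 0) (hi := n/2) (d := d₁) (r d₁) (by omega)
    have hstep := mis_robber_step (a₀ := Function.update a₀ d₀ (r d₀))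
      (a₁ := Function.update a₁ d₁ (r d₁)) hr'
    omega

lemma copsWin (hk : 2 ^ (n - n/2 + 1) ≤ k) : CopsWinIn (hypercube n) k n := by
  classical
  have hcard : Fintype.card (Bool × (Fin (n - n/2) → Bool)) ≤ Fintype.card (Fin k) := by
    simp only [Fintype.card_prod, Fintype.card_bool, Fintype.card_fun, Fintype.card_fin]
    calc 2 * 2 ^ (n - n/2) = 2 ^ (n - n/2 + 1) := by rw [pow_succ]; ring
      _ ≤ k := hk
  obtain ⟨f⟩ := Function.Embedding.nonempty_iff_card_le.mpr hcard
  refine ⟨copPos f (fun _ => false) (fun _ => false), fun r => ?_⟩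
  apply catch_main f n
  have b0 := mis_le 0 (n/2) (fun _ => false) r
  have b1 := mis_le (n/2) (2*(n/2)) (fun _ => false) r
  omega

lemma sqrt2_lb : (1.41421 : ℝ) ≤ Real.sqrt 2 := by
  rw [show (1.41421:ℝ) = Real.sqrt (1.41421^2) by rw [Real.sqrt_sq (by norm_num)]]
  exact Real.sqrt_le_sqrt (by norm_num)

lemma sqrt2_ub : Real.sqrt 2 ≤ (1.41422 : ℝ) := by
  rw [show (1.41422:ℝ) = Real.sqrt (1.41422^2) by rw [Real.sqrt_sq (by norm_num)]]
  exact Real.sqrt_le_sqrt (by norm_num)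

lemma c_lb : (0.14644 : ℝ) ≤ cconst := by
  have := sqrt2_ub; rw [cconst]; linarith

lemma c_ub : cconst ≤ (0.14645 : ℝ) := by
  have := sqrt2_lb; rw [cconst]; linarith

/-- binary entropy lower estimate: for 0 < y < 1,
    y·log₂ y + (1-y)·log₂(1-y) ≥ -1 -/
lemma entropy_ge (y : ℝ) (h0 : 0 < y) (h1 : y < 1) :
    -1 ≤ y * Real.logb 2 y + (1 - y) * Real.logb 2 (1 - y) := by
  have hy1 : (0:ℝ) < 1 - y := by linarith
  have hlog2 : (0:ℝ) < Real.log 2 := Real.log_pos (by norm_num)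
  -- work with natural log
  have key : -Real.log 2 ≤ y * Real.log y + (1 - y) * Real.log (1 - y) := by
    have e1 : Real.log y = Real.log (2*y) - Real.log 2 := by
      rw [Real.log_mul (by norm_num) h0.ne']; ring
    have e2 : Real.log (1-y) = Real.log (2*(1-y)) - Real.log 2 := by
      rw [Real.log_mul (by norm_num) hy1.ne']; ring
    have b1 : 1 - 1/(2*y) ≤ Real.log (2*y) := by
      have h := Real.log_le_sub_one_of_pos (show (0:ℝ) < 1/(2*y) by positivity)
      rw [one_div, Real.log_inv] at h
      rw [one_div]
      linarith
    have b2 : 1 - 1/(2*(1-y)) ≤ Real.log (2*(1-y)) := by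
      have h := Real.log_le_sub_one_of_pos (show (0:ℝ) < 1/(2*(1-y)) by positivity)
      rw [one_div, Real.log_inv] at h
      rw [one_div]
      linarith
    have c1 : y - 1/2 ≤ y * Real.log (2*y) := by
      have := mul_le_mul_of_nonneg_left b1 h0.le
      have e : y * (1 - 1/(2*y)) = y - 1/2 := by field_simp
      linarith
    have c2 : (1-y) - 1/2 ≤ (1-y) * Real.log (2*(1-y)) := by
      have := mul_le_mul_of_nonneg_left b2 hy1.le
      have e : (1-y) * (1 - 1/(2*(1-y))) = (1-y) - 1/2 := by field_simp
      linarith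
    rw [e1, e2]
    nlinarith
  rw [Real.logb, Real.logb]
  rw [show y * (Real.log y / Real.log 2) + (1 - y) * (Real.log (1-y) / Real.log 2)
      = (y * Real.log y + (1 - y) * Real.log (1-y)) / Real.log 2 by ring]
  rw [le_div_iff₀ hlog2]
  linarith

lemma logb2_3 : (79/50 : ℝ) ≤ Real.logb 2 3 := by
  rw [Real.logb, le_div_iff₀ (Real.log_pos (by norm_num))]
  have h : Real.log (2 ^ (79:ℕ)) ≤ Real.log (3 ^ (50:ℕ)) := by
    apply Real.log_le_log (by positivity)
    norm_num
  rw [Real.log_pow, Real.log_pow] at h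
  push_cast at h
  linarith

/-- H(c) ≥ 0.55, stated as needed -/
lemma hc_le : cconst * Real.logb 2 cconst + (1 - cconst) * Real.logb 2 (1 - cconst)
    ≤ -(0.55 : ℝ) := by
  have hc0 : (0:ℝ) < cconst := lt_of_lt_of_le (by norm_num) c_lb
  have hc1 : cconst < 1 := lt_of_le_of_lt c_ub (by norm_num)
  have h1c : (0:ℝ) < 1 - cconst := by linarith
  have hlog2 : (0:ℝ) < Real.log 2 := Real.log_pos (by norm_num)
  -- term 1: cconst * logb 2 cconst ≤ -0.37781
  have hinv : (6:ℝ) ≤ 1/cconst := by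
    rw [le_div_iff₀ hc0]
    have := c_ub; linarith
  have hlb6 : (129/50 : ℝ) ≤ Real.logb 2 (1/cconst) := by
    have h6 : Real.logb 2 6 ≤ Real.logb 2 (1/cconst) :=
      Real.logb_le_logb_of_le (by norm_num) (by norm_num) hinv
    have : Real.logb 2 6 = 1 + Real.logb 2 3 := by
      rw [show (6:ℝ) = 2 * 3 by norm_num, Real.logb_mul (by norm_num) (by norm_num),
        Real.logb_self_eq_one (by norm_num)]
    have := logb2_3
    linarith
  have hlogc : Real.logb 2 cconst ≤ -(129/50) := by
    have : Real.logb 2 (1/cconst) = - Real.logb 2 cconst := by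
      rw [one_div, Real.logb_inv]
    linarith
  have t1 : cconst * Real.logb 2 cconst ≤ 0.14644 * (-(129/50)) := by
    calc cconst * Real.logb 2 cconst ≤ cconst * (-(129/50)) :=
          mul_le_mul_of_nonneg_left hlogc hc0.le
      _ ≤ 0.14644 * (-(129/50)) := by nlinarith [c_lb]
  -- term 2: (1-c) * logb 2 (1-c) ≤ -(1-c)*c/log 2 ≤ -0.18
  have hlog1c : Real.log (1 - cconst) ≤ -cconst := by
    have := Real.log_le_sub_one_of_pos h1c
    linarith
  have t2 : (1 - cconst) * Real.logb 2 (1 - cconst) ≤ -(0.18 : ℝ) := by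
    have hb : Real.logb 2 (1 - cconst) ≤ -cconst / Real.log 2 := by
      rw [Real.logb, div_le_div_iff₀ hlog2 hlog2]
      nlinarith
    have hlog2ub : Real.log 2 ≤ 0.6932 := le_of_lt (lt_trans Real.log_two_lt_d9 (by norm_num))
    have hcd : -cconst / Real.log 2 ≤ -(0.14644) / 0.6932 := by
      rw [div_le_div_iff₀ hlog2 (by norm_num)]
      nlinarith [c_lb]
    have h1cb : (0.85355 : ℝ) ≤ 1 - cconst := by have := c_ub; linarith
    calc (1 - cconst) * Real.logb 2 (1 - cconst)
        ≤ (1 - cconst) * (-(0.14644) / 0.6932) := by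
          apply mul_le_mul_of_nonneg_left _ h1c.le
          linarith
      _ ≤ 0.85355 * (-(0.14644) / 0.6932) := by nlinarith
      _ ≤ -(0.18 : ℝ) := by norm_num
  nlinarith

lemma bconst_le : bconst ≤ (0.45 : ℝ) := by
  have hA := entropy_ge (2 * cconst)
    (by have := c_lb; linarith) (by have := c_ub; linarith)
  have hB := hc_le
  rw [bconst, gfun]
  linarith

lemma bconst_bound : 1 - bconst ≥ (0.55 : ℝ) := by have := bconst_le; linarith

lemma lower_bound {n k t : ℕ} (ε : ℝ) (hε : 0 < ε) (hn : 1 ≤ n)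
    (hk2 : (k : ℝ) ≤ (2 : ℝ) ^ ((n : ℝ) * (1 - ε)))
    (hwin : CopsWinIn (hypercube n) k t) :
    min (1/4 : ℝ) (ε^2/100) * n < t := by
  classical
  obtain ⟨δ, hδdef, hδ0, hδ14, hδkey⟩ := delta_facts ε hε
  rw [← hδdef]
  by_contra hcon
  push_neg at hcon   -- (t:ℝ) ≤ δ * n
  have hδ1 : δ < 1 := by linarith
  have htn : t ≤ n := by
    have hn1 : (1:ℝ) ≤ (n:ℝ) := by exact_mod_cast hn
    have : (t:ℝ) ≤ (n:ℝ) := by nlinarith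
    exact_mod_cast this
  -- covering
  obtain ⟨c₀, hc₀⟩ := hwin
  have hcov : ∀ r : Fin n → Bool, ∃ i, hammingDist (c₀ i) r ≤ t := by
    intro r
    by_contra hfar
    push_neg at hfar
    exact no_catch t c₀ r (fun i => hfar i) (hc₀ r)
  -- counting in ℕ
  set B : ℕ := ∑ s ∈ range (t + 1), n.choose s with hB
  have hcount : 2 ^ n ≤ k * B := by
    have hsub : (univ : Finset (Fin n → Bool)) ⊆
        (univ : Finset (Fin k)).biUnion
          (fun i => univ.filter fun x : Fin n → Bool => hammingDist (c₀ i) x ≤ t) := by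
      intro r _
      obtain ⟨i, hi⟩ := hcov r
      exact Finset.mem_biUnion.mpr ⟨i, mem_univ i, by simp [hi]⟩
    calc 2 ^ n = (univ : Finset (Fin n → Bool)).card := by
          simp [Finset.card_univ, Fintype.card_fun]
      _ ≤ _ := Finset.card_le_card hsub
      _ ≤ ∑ i : Fin k, (univ.filter fun x : Fin n → Bool => hammingDist (c₀ i) x ≤ t).card :=
          Finset.card_biUnion_le
      _ ≤ ∑ _i : Fin k, B := Finset.sum_le_sum (fun i _ => ball_card_le (c₀ i) t)
      _ = k * B := by simp [Finset.sum_const, Finset.card_univ, mul_comm]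
  -- real chain
  have h1δ0 : (0:ℝ) < 1 - δ := by linarith
  have hP0 : (0:ℝ) < δ ^ t * (1 - δ) ^ (n - t) := mul_pos (pow_pos hδ0 _) (pow_pos h1δ0 _)
  have hBP : (B : ℝ) * (δ ^ t * (1 - δ) ^ (n - t)) ≤ 1 := by
    have := sum_choose_mul_le n t δ hδ0 (by linarith) htn
    rw [hB]
    push_cast
    exact this
  have hmain : (2:ℝ) ^ ((n:ℝ) * ε) * (δ ^ t * (1 - δ) ^ (n - t)) ≤ 1 := by
    have h2n : ((2:ℝ) ^ n : ℝ) = (2:ℝ) ^ ((n:ℝ) * (1 - ε)) * (2:ℝ) ^ ((n:ℝ) * ε) := by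
      rw [← Real.rpow_add (by norm_num)]
      rw [show (n:ℝ) * (1 - ε) + (n:ℝ) * ε = (n:ℝ) by ring]
      rw [Real.rpow_natCast]
    have hA : (2:ℝ) ^ n * (δ ^ t * (1 - δ) ^ (n - t)) ≤ (2:ℝ) ^ ((n:ℝ) * (1 - ε)) := by
      calc (2:ℝ) ^ n * (δ ^ t * (1 - δ) ^ (n - t))
          ≤ (k * B : ℕ) * (δ ^ t * (1 - δ) ^ (n - t)) := by
            apply mul_le_mul_of_nonneg_right _ hP0.le
            exact_mod_cast hcount
        _ = (k:ℝ) * ((B:ℝ) * (δ ^ t * (1 - δ) ^ (n - t))) := by push_cast; ring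
        _ ≤ (k:ℝ) * 1 := by
            apply mul_le_mul_of_nonneg_left hBP (Nat.cast_nonneg k)
        _ ≤ (2:ℝ) ^ ((n:ℝ) * (1 - ε)) := by rw [mul_one]; exact hk2
    rw [h2n] at hA
    have hpos : (0:ℝ) < (2:ℝ) ^ ((n:ℝ) * (1 - ε)) := Real.rpow_pos_of_pos (by norm_num) _
    have hA' : (2:ℝ) ^ ((n:ℝ) * (1 - ε)) * ((2:ℝ) ^ ((n:ℝ) * ε) * (δ ^ t * (1 - δ) ^ (n - t)))
        ≤ (2:ℝ) ^ ((n:ℝ) * (1 - ε)) * 1 := by rw [mul_one, ← mul_assoc]; exact hA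
    exact le_of_mul_le_mul_left hA' hpos
  -- take logs
  have hlog : (n:ℝ) * ε * Real.log 2 + (t:ℝ) * Real.log δ + ((n - t : ℕ):ℝ) * Real.log (1-δ) ≤ 0 := by
    have hx : (0:ℝ) < (2:ℝ) ^ ((n:ℝ) * ε) := Real.rpow_pos_of_pos (by norm_num) _
    have := Real.log_le_log (by positivity) hmain
    rw [Real.log_mul hx.ne' hP0.ne', Real.log_mul (pow_pos hδ0 t).ne' (pow_pos h1δ0 _).ne',
        Real.log_rpow (by norm_num), Real.log_pow, Real.log_pow, Real.log_one] at this
    push_cast at this ⊢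
    linarith
  have hlogδ : Real.log δ = - Real.log (1/δ) := by rw [one_div, Real.log_inv, neg_neg]
  have hlog1δ : Real.log (1-δ) = - Real.log (1/(1-δ)) := by rw [one_div, Real.log_inv, neg_neg]
  rw [hlogδ, hlog1δ] at hlog
  have hl1 : (0:ℝ) ≤ Real.log (1/δ) := Real.log_nonneg (by rw [le_div_iff₀ hδ0]; linarith)
  have hl2 : (0:ℝ) ≤ Real.log (1/(1-δ)) := Real.log_nonneg (by rw [le_div_iff₀ (by linarith)]; linarith)
  have hnt : ((n - t : ℕ):ℝ) ≤ (n:ℝ) := by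
    have : (n - t : ℕ) ≤ n := Nat.sub_le n t
    exact_mod_cast this
  have hnt0 : (0:ℝ) ≤ ((n - t : ℕ):ℝ) := Nat.cast_nonneg _
  -- n ε log 2 ≤ t log(1/δ) + (n-t) log(1/(1-δ)) ≤ δ n log(1/δ) + n log(1/(1-δ)) ≤ (4/15) ε n
  have step1 : (n:ℝ) * ε * Real.log 2 ≤ (t:ℝ) * Real.log (1/δ) + ((n-t:ℕ):ℝ) * Real.log (1/(1-δ)) := by
    linarith
  have step2 : (t:ℝ) * Real.log (1/δ) + ((n-t:ℕ):ℝ) * Real.log (1/(1-δ))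
      ≤ (n:ℝ) * (Real.log (1/δ) * δ + Real.log (1/(1-δ))) := by
    have a1 : (t:ℝ) * Real.log (1/δ) ≤ δ * (n:ℝ) * Real.log (1/δ) :=
      mul_le_mul_of_nonneg_right hcon hl1
    have a2 : ((n-t:ℕ):ℝ) * Real.log (1/(1-δ)) ≤ (n:ℝ) * Real.log (1/(1-δ)) :=
      mul_le_mul_of_nonneg_right hnt hl2
    nlinarith
  have step3 : (n:ℝ) * (Real.log (1/δ) * δ + Real.log (1/(1-δ))) ≤ (n:ℝ) * ((4/15)*ε) := by
    apply mul_le_mul_of_nonneg_left hδkey (Nat.cast_nonneg n)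
  have hlog2 : (0.6931471803 : ℝ) < Real.log 2 := Real.log_two_gt_d9
  have hn1 : (1:ℝ) ≤ (n:ℝ) := by exact_mod_cast hn
  have hnε : (0:ℝ) < (n:ℝ) * ε := mul_pos (by linarith) hε
  nlinarith [mul_lt_mul_of_pos_left hlog2 hnε]

end CRAux

/-- For any fixed `ε > 0`, `capt_k(Q_n) = Θ(n)` uniformly over all
`2^{n(1-b+ε)} < k ≤ 2^{n(1-ε)}`. -/
theorem captTime_hypercube_theta_n (ε : ℝ) (hε : 0 < ε) :
    ∃ C₁ C₂ : ℝ, 0 < C₁ ∧ 0 < C₂ ∧ ∃ N : ℕ, ∀ n : ℕ, N ≤ n → ∀ k : ℕ,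
      (2 : ℝ) ^ ((n : ℝ) * (1 - bconst + ε)) < (k : ℝ) →
      (k : ℝ) ≤ (2 : ℝ) ^ ((n : ℝ) * (1 - ε)) →
      C₁ * n ≤ (captTime (hypercube n) k : ℝ) ∧
      (captTime (hypercube n) k : ℝ) ≤ C₂ * n := by
  classical
  refine ⟨min (1/4 : ℝ) (ε^2/100), 1, lt_min (by norm_num) (by positivity), by norm_num, 40, ?_⟩
  intro n hn k hk1 hk2
  have hn1 : 1 ≤ n := by omega
  have hnR : (40:ℝ) ≤ (n:ℝ) := by exact_mod_cast hn
  have hq1 : (n:ℝ) ≤ 2 * ((n/2 : ℕ) : ℝ) + 1 := by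
    have h : n ≤ 2 * (n/2) + 1 := by omega
    exact_mod_cast h
  have hq2 : ((n/2 : ℕ) : ℝ) ≤ (n:ℝ)/2 := by
    have h : 2 * (n/2) ≤ n := by omega
    have : (2 * (n/2) : ℕ) ≤ (n:ℕ) := h
    have := (Nat.cast_le (α := ℝ)).mpr this
    push_cast at this
    linarith
  have hb : (0.55:ℝ) ≤ 1 - bconst + ε := by
    have := CRAux.bconst_le; linarith
  have hmcast : ((n - n/2 + 1 : ℕ) : ℝ) = (n:ℝ) - ((n/2 : ℕ) : ℝ) + 1 := by
    have h2 : n/2 ≤ n := Nat.div_le_self n 2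
    push_cast [Nat.cast_sub h2]
    ring
  have hexp : ((n - n/2 + 1 : ℕ) : ℝ) ≤ (n:ℝ) * (1 - bconst + ε) := by
    rw [hmcast]
    have hmul := mul_le_mul_of_nonneg_left hb (show (0:ℝ) ≤ (n:ℝ) by positivity)
    linarith
  have hkm : 2 ^ (n - n/2 + 1) ≤ k := by
    have h1 : ((2 ^ (n - n/2 + 1) : ℕ) : ℝ) < (k:ℝ) := by
      calc ((2 ^ (n - n/2 + 1) : ℕ) : ℝ) = (2:ℝ) ^ (((n - n/2 + 1 : ℕ) : ℕ) : ℝ) := by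
            rw [Real.rpow_natCast]; push_cast; ring
        _ ≤ (2:ℝ) ^ ((n:ℝ) * (1 - bconst + ε)) :=
            Real.rpow_le_rpow_of_exponent_le one_le_two hexp
        _ < (k:ℝ) := hk1
    have h2 : (2 ^ (n - n/2 + 1) : ℕ) < k := by exact_mod_cast h1
    omega
  have hwin : CopsWinIn (hypercube n) k n := CRAux.copsWin hkm
  have hub : captTime (hypercube n) k ≤ n := Nat.sInf_le hwin
  have hmem : CopsWinIn (hypercube n) k (captTime (hypercube n) k) :=
    Nat.sInf_mem (⟨n, hwin⟩ : Set.Nonempty {t | CopsWinIn (hypercube n) k t})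
  have hlb := CRAux.lower_bound ε hε hn1 hk2 hmem
  constructor
  · exact le_of_lt hlb
  · have hc : ((captTime (hypercube n) k : ℕ) : ℝ) ≤ (n:ℝ) := by exact_mod_cast hub
    rw [one_mul]
    exact hc
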